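/- Let 0 < a < b with 2a < 1 and b < 1, and let g be the piecewise linear map through (0,0), (a, 2a), (b, 1), (2b - a, 2a), (2a, 4(b - a)), (1, 0) — assumed to form a valid increasing-then-decreasing unimodal graph. Let h be the piecewise linear increasing map through (0,0), (a/b, 2a), (1,1). Then h ∘ f = g ∘ h, where f is the tent map; i.e. h conjugates the tent map to g. -/

import Mathlib

/-- `F` is affine (linear) on the set `s`. -/
def AffOn (F : ℝ → ℝ) (s : Set ℝ) : Prop :=
  ∃ m c : ℝ, ∀ x ∈ s, F x = m * x + c

/-- The tent map. -/
noncomputable def tent (x : ℝ) : ℝ := 1 - |1 - 2 * x|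

lemma affOn_formula {F : ℝ → ℝ} {u v : ℝ} (huv : u < v) (hA : AffOn F (Set.Icc u v)) :
    ∀ x ∈ Set.Icc u v, F x = F u + (F v - F u) / (v - u) * (x - u) := by
  obtain ⟨m, c, hm⟩ := hA
  intro x hx
  rw [hm x hx, hm u ⟨le_refl u, huv.le⟩, hm v ⟨huv.le, le_refl v⟩]
  have hne : v - u ≠ 0 := by intro hc; rw [sub_eq_zero] at hc; exact absurd hc.symm huv.ne
  field_simp
  ring

/-- The piecewise linear map `g` through `(0,0)`, `(a,2a)`, `(b,1)`, `(2b-a,2a)`,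
`(2a, 4(b-a))`, `(1,0)` is conjugate to the tent map via the piecewise linear increasing
map `h` through `(0,0)`, `(a/b, 2a)`, `(1,1)`. -/
theorem conj_example3 (a b : ℝ)
    (ha : 0 < a) (hab : a < b) (hord : 2 * b - a < 2 * a) (h2a : 2 * a < 1)
    (hdec : 4 * (b - a) < 2 * a) (g h : ℝ → ℝ)
    (hg0 : g 0 = 0) (hg1 : g a = 2 * a) (hg2 : g b = 1)
    (hg3 : g (2 * b - a) = 2 * a) (hg4 : g (2 * a) = 4 * (b - a)) (hg5 : g 1 = 0)
    (hgA1 : AffOn g (Set.Icc 0 a))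
    (hgA2 : AffOn g (Set.Icc a b))
    (hgA3 : AffOn g (Set.Icc b (2 * b - a)))
    (hgA4 : AffOn g (Set.Icc (2 * b - a) (2 * a)))
    (hgA5 : AffOn g (Set.Icc (2 * a) 1))
    (hh0 : h 0 = 0) (hh1 : h (a / b) = 2 * a) (hh2 : h 1 = 1)
    (hhA1 : AffOn h (Set.Icc 0 (a / b)))
    (hhA2 : AffOn h (Set.Icc (a / b) 1)) :
    ∀ x ∈ Set.Icc (0 : ℝ) 1, h (tent x) = g (h x) := by
  have hb : 0 < b := ha.trans hab
  have ha' : a ≠ 0 := ha.ne'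
  have hb' : b ≠ 0 := hb.ne'
  have hba : (0:ℝ) < b - a := by linarith
  have hba' : b - a ≠ 0 := hba.ne'
  have h2a' : (1:ℝ) - 2 * a ≠ 0 := by intro hc; linarith
  have hp0 : (0:ℝ) < a / b := div_pos ha hb
  have hpb : a / b < 1 := (div_lt_one hb).2 hab
  have h3a : 2 * b < 3 * a := by linarith
  -- explicit formulas for h
  have hH1 : ∀ y ∈ Set.Icc (0:ℝ) (a / b), h y = 2 * b * y := by
    intro y hy
    rw [affOn_formula hp0 hhA1 y hy, hh0, hh1]
    field_simp
    ring
    field_simp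
  have hH2 : ∀ y ∈ Set.Icc (a / b) (1:ℝ),
      h y = 1 + b * (1 - 2 * a) / (b - a) * (y - 1) := by
    intro y hy
    rw [affOn_formula hpb hhA2 y hy, hh1, hh2]
    field_simp
    ring
  -- explicit formulas for g
  have hG1 : ∀ y ∈ Set.Icc (0:ℝ) a, g y = 2 * y := by
    intro y hy
    rw [affOn_formula ha hgA1 y hy, hg0, hg1]
    field_simp
    ring
  have hG2 : ∀ y ∈ Set.Icc a b, g y = 1 + (1 - 2 * a) / (b - a) * (y - b) := by
    intro y hy
    rw [affOn_formula hab hgA2 y hy, hg1, hg2]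
    field_simp
    ring
  have hbb : b < 2 * b - a := by linarith
  have hG3 : ∀ y ∈ Set.Icc b (2 * b - a),
      g y = 1 + (2 * a - 1) / (b - a) * (y - b) := by
    intro y hy
    rw [affOn_formula hbb hgA3 y hy, hg2, hg3]
    have hr : (2 * b - a - b) = b - a := by ring
    rw [hr]
  have hG4 : ∀ y ∈ Set.Icc (2 * b - a) (2 * a), g y = 4 * b - 2 * y := by
    intro y hy
    rw [affOn_formula hord hgA4 y hy, hg3, hg4]
    have hne : 2 * a - (2 * b - a) ≠ 0 := by intro hc; linarith
    field_simp
    ring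
  have hG5 : ∀ y ∈ Set.Icc (2 * a) (1:ℝ),
      g y = 4 * (b - a) / (1 - 2 * a) * (1 - y) := by
    intro y hy
    rw [affOn_formula h2a hgA5 y hy, hg4, hg5]
    have hD : 4 * (b - a) / (1 - 2 * a) * (1 - 2 * a) = 4 * (b - a) := div_mul_cancel₀ _ h2a'
    linear_combination -hD
  -- main case analysis
  intro x hx
  obtain ⟨hx0, hx1⟩ := hx
  rcases le_total x (1 / 2) with hhalf | hhalf
  · -- tent x = 2 x
    have ht : tent x = 2 * x := by
      unfold tent
      rw [abs_of_nonneg (by linarith)]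
      ring
    rw [ht]
    rcases le_total (2 * x) (a / b) with hcase | hcase
    · -- case A
      have hxb : 2 * x * b ≤ a := (le_div_iff₀ hb).1 hcase
      have hhx : h x = 2 * b * x := hH1 x ⟨hx0, by linarith [hp0.le, hcase]⟩
      have hht : h (2 * x) = 2 * b * (2 * x) := hH1 (2 * x) ⟨by linarith, hcase⟩
      rw [hht, hhx, hG1 (2 * b * x) ⟨by positivity, by linarith⟩]
      ring
    · -- case B
      have hxb : a ≤ 2 * x * b := (div_le_iff₀ hb).1 hcase
      have hab2 : (1:ℝ) / 2 ≤ a / b := by rw [le_div_iff₀ hb]; linarith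
      have hhx : h x = 2 * b * x := hH1 x ⟨hx0, le_trans hhalf hab2⟩
      have hht : h (2 * x) = 1 + b * (1 - 2 * a) / (b - a) * (2 * x - 1) :=
        hH2 (2 * x) ⟨hcase, by linarith⟩
      rw [hht, hhx, hG2 (2 * b * x) ⟨by linarith, by linarith [mul_nonneg hb.le (sub_nonneg.2 hhalf)]⟩]
      field_simp
  · -- tent x = 2 - 2 x
    have ht : tent x = 2 - 2 * x := by
      unfold tent
      rw [abs_of_nonpos (by linarith)]
      ring
    rw [ht]
    rcases le_total x (a / b) with hxab | hxab
    · have hxb : x * b ≤ a := (le_div_iff₀ hb).1 hxab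
      have hhx : h x = 2 * b * x := hH1 x ⟨hx0, hxab⟩
      rcases le_total (2 * b * x) (2 * b - a) with hcase | hcase
      · -- case C
        have htm : 2 - 2 * x ∈ Set.Icc (a / b) (1:ℝ) := by
          constructor
          · rw [div_le_iff₀ hb]; linarith
          · linarith
        have hht : h (2 - 2 * x) = 1 + b * (1 - 2 * a) / (b - a) * (2 - 2 * x - 1) :=
          hH2 (2 - 2 * x) htm
        rw [hht, hhx, hG3 (2 * b * x) ⟨by linarith [mul_nonneg hb.le (sub_nonneg.2 hhalf)], hcase⟩]
        field_simp
        ring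
      · -- case D
        have htm : 2 - 2 * x ∈ Set.Icc (0:ℝ) (a / b) := by
          constructor
          · linarith
          · rw [le_div_iff₀ hb]; linarith
        have hht : h (2 - 2 * x) = 2 * b * (2 - 2 * x) := hH1 (2 - 2 * x) htm
        rw [hht, hhx, hG4 (2 * b * x) ⟨hcase, by linarith⟩]
        ring
    · -- case E
      have hxb : a ≤ x * b := (div_le_iff₀ hb).1 hxab
      have hhx : h x = 1 + b * (1 - 2 * a) / (b - a) * (x - 1) := hH2 x ⟨hxab, hx1⟩
      have htm : 2 - 2 * x ∈ Set.Icc (0:ℝ) (a / b) := by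
        constructor
        · linarith
        · rw [le_div_iff₀ hb]; linarith
      have hht : h (2 - 2 * x) = 2 * b * (2 - 2 * x) := hH1 (2 - 2 * x) htm
      have hM : 0 ≤ b * (1 - 2 * a) / (b - a) := by
        apply div_nonneg _ hba.le
        have := mul_nonneg hb.le (by linarith : (0:ℝ) ≤ 1 - 2 * a)
        linarith
      have hmem : h x ∈ Set.Icc (2 * a) (1:ℝ) := by
        rw [hhx]
        constructor
        · have hstep : b * (1 - 2 * a) / (b - a) * (1 - x)
              ≤ b * (1 - 2 * a) / (b - a) * (1 - a / b) :=
            mul_le_mul_of_nonneg_left (by linarith) hM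
          have heq : b * (1 - 2 * a) / (b - a) * (1 - a / b) = 1 - 2 * a := by
            field_simp
          have hrw : b * (1 - 2 * a) / (b - a) * (x - 1)
              = -(b * (1 - 2 * a) / (b - a) * (1 - x)) := by ring
          rw [hrw]
          linarith [hstep, heq ▸ hstep]
        · have hle : b * (1 - 2 * a) / (b - a) * (x - 1) ≤ 0 :=
            mul_nonpos_of_nonneg_of_nonpos hM (by linarith)
          linarith
      rw [hht, hG5 (h x) hmem, hhx]
      field_simp
      ring
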